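/- Let G be a finite additive abelian group and Σ=(Γ=(V,E),σ) a signed graph. Then the number P_Σ(G) of proper G-colorings of Σ is given by P_Σ(G) = (−1)^{|V|−k(Σ)} · |G|^{k(Σ)} · T_Σ(1−|G|, 0, 1−1/|2G|). -/

import Mathlib

attribute [local instance] Classical.propDecidable

noncomputable section SignedGraphs

/-- A signed graph: a multigraph with ordered pairs of endpoints (the order is
an artefact of the encoding) together with a sign `±1` on each edge. -/
structure SGraph (V : Type*) (E : Type*) where
  ends : E → V × V
  sign : E → ℤˣ

namespace SGraph

variable {V E : Type*}

/-- Endpoint of `e` on side `b`; a loop has both endpoints equal, but its two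
half-edges are distinguished by the side `b`. -/
def endpt (Γ : SGraph V E) (e : E) (b : Bool) : V :=
  cond b (Γ.ends e).1 (Γ.ends e).2

/-- `e` is a loop of the underlying graph. -/
def IsLoop (Γ : SGraph V E) (e : E) : Prop := (Γ.ends e).1 = (Γ.ends e).2

/-- Walks in a signed multigraph: a step traverses an edge `e` in direction `d`
(from the side-`d` endpoint to the other endpoint). -/
inductive Walk (Γ : SGraph V E) : V → V → Type _
  | nil (v : V) : Walk Γ v v
  | cons (e : E) (d : Bool) {w : V} (p : Walk Γ (Γ.endpt e (!d)) w) : Walk Γ (Γ.endpt e d) w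

namespace Walk

variable {Γ : SGraph V E}

/-- The list of vertices visited by a walk (including the final one). -/
def verts : ∀ {u v : V}, Γ.Walk u v → List V
  | _, _, .nil x => [x]
  | _, _, .cons e d p => Γ.endpt e d :: p.verts

/-- The list of edges traversed by a walk. -/
def edges : ∀ {u v : V}, Γ.Walk u v → List E
  | _, _, .nil _ => []
  | _, _, .cons e _ p => e :: p.edges

/-- The list of (edge, direction) steps of a walk. -/
def steps : ∀ {u v : V}, Γ.Walk u v → List (E × Bool)
  | _, _, .nil _ => []
  | _, _, .cons e d p => (e, d) :: p.steps

/-- The sources of the steps of a walk, i.e. all visited vertices except the last. -/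
def srcs {u v : V} (W : Γ.Walk u v) : List V := W.verts.dropLast

/-- The sign of a walk: the product of the signs of its edges. -/
def sgn : ∀ {u v : V}, Γ.Walk u v → ℤˣ
  | _, _, .nil _ => 1
  | _, _, .cons e _ p => Γ.sign e * p.sgn

/-- Concatenation of walks. -/
def append : ∀ {u v w : V}, Γ.Walk u v → Γ.Walk v w → Γ.Walk u w
  | _, _, _, .nil _, q => q
  | _, _, _, .cons e d p, q => .cons e d (p.append q)

/-- The sum `Σᵢ f(eᵢ)` of the values of `f` on the edges of the walk,
with multiplicity. -/
def edgeSum {G : Type*} [AddCommGroup G] (f : E → G) {u v : V} (W : Γ.Walk u v) : G :=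
  (W.edges.map f).sum

/-- The sum `Σᵢ ω(vᵢ,eᵢ)·(Π_{j<i} σ(eⱼ))·f(eᵢ)` along a walk, where `ω(vᵢ,eᵢ)`
is the value of `ω` on the half-edge by which the walk leaves `vᵢ`. -/
def tensionSum {G : Type*} [AddCommGroup G] (ω : E → Bool → ℤˣ) (f : E → G) :
    ∀ {u v : V}, Γ.Walk u v → G
  | _, _, .nil _ => 0
  | _, _, .cons e d p => ((ω e d : ℤ) • f e) + ((Γ.sign e : ℤ) • tensionSum ω f p)

/-- `Q` is the reverse of the walk `P`. -/
def IsReverseOf {u v : V} (Q : Γ.Walk v u) (P : Γ.Walk u v) : Prop :=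
  Q.steps = P.steps.reverse.map fun s => (s.1, !s.2)

end Walk

/-- A closed walk is a cycle if it is nontrivial, visits no vertex twice and
uses no edge twice. -/
def IsCycle (Γ : SGraph V E) {v : V} (W : Γ.Walk v v) : Prop :=
  W.edges ≠ [] ∧ W.srcs.Nodup ∧ W.edges.Nodup

/-- A balanced (positive) cycle. -/
def IsBalancedCycle (Γ : SGraph V E) {v : V} (W : Γ.Walk v v) : Prop :=
  Γ.IsCycle W ∧ W.sgn = 1

/-- An unbalanced (negative) cycle. -/
def IsUnbalancedCycle (Γ : SGraph V E) {v : V} (W : Γ.Walk v v) : Prop :=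
  Γ.IsCycle W ∧ W.sgn = -1

/-- A nontrivial walk that is a simple path (all visited vertices distinct). -/
def IsPathWalk (Γ : SGraph V E) {u v : V} (P : Γ.Walk u v) : Prop :=
  P.edges ≠ [] ∧ P.verts.Nodup

/-- A tight handcuff at `v`: two edge-disjoint unbalanced cycles sharing exactly
the vertex `v`. -/
def IsTightHandcuff (Γ : SGraph V E) {v : V} (C₁ C₂ : Γ.Walk v v) : Prop :=
  Γ.IsUnbalancedCycle C₁ ∧ Γ.IsUnbalancedCycle C₂ ∧
    (∀ x ∈ C₁.srcs, x ∈ C₂.srcs → x = v) ∧ ∀ e ∈ C₁.edges, e ∉ C₂.edges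

/-- A loose handcuff: two vertex-disjoint unbalanced cycles `C₁` (at `u`) and
`C₂` (at `w`) joined by a simple path `P` from `u` to `w` meeting the cycles
exactly in its endpoints. -/
def IsLooseHandcuff (Γ : SGraph V E) {u w : V} (C₁ : Γ.Walk u u) (P : Γ.Walk u w)
    (C₂ : Γ.Walk w w) : Prop :=
  Γ.IsUnbalancedCycle C₁ ∧ Γ.IsUnbalancedCycle C₂ ∧ Γ.IsPathWalk P ∧
    (∀ x ∈ C₁.srcs, x ∉ C₂.srcs) ∧
    (∀ x ∈ P.verts, x ∈ C₁.srcs → x = u) ∧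
    (∀ x ∈ P.verts, x ∈ C₂.srcs → x = w) ∧
    ∀ e ∈ P.edges, e ∉ C₁.edges ∧ e ∉ C₂.edges

/-- The canonical closed walks traversing a circuit of the signed graph:
a balanced cycle, a tight handcuff `C₁ * C₂`, or a loose handcuff
`C₁ * P * C₂ * P⁻¹` (the circuit path edges being used twice). -/
def IsBasicCircuitWalk (Γ : SGraph V E) {v : V} (W : Γ.Walk v v) : Prop :=
  Γ.IsBalancedCycle W ∨
    (∃ C₁ C₂ : Γ.Walk v v, Γ.IsTightHandcuff C₁ C₂ ∧ W = C₁.append C₂) ∨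
    ∃ (w : V) (C₁ : Γ.Walk v v) (P : Γ.Walk v w) (C₂ : Γ.Walk w w) (Q : Γ.Walk w v),
      Γ.IsLooseHandcuff C₁ P C₂ ∧ Q.IsReverseOf P ∧
        W = C₁.append (P.append (C₂.append Q))

/-- A circuit walk: a rotation of a basic circuit walk. -/
def IsCircuitWalk (Γ : SGraph V E) {v : V} (W : Γ.Walk v v) : Prop :=
  ∃ (u : V) (A : Γ.Walk u v) (B : Γ.Walk v u),
    W = B.append A ∧ Γ.IsBasicCircuitWalk (A.append B)

/-- `e` is a circuit path edge: it lies on the connecting path of an unbalanced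
loose handcuff. -/
def IsCircuitPathEdge (Γ : SGraph V E) (e : E) : Prop :=
  ∃ (u w : V) (C₁ : Γ.Walk u u) (P : Γ.Walk u w) (C₂ : Γ.Walk w w),
    Γ.IsLooseHandcuff C₁ P C₂ ∧ e ∈ P.edges

/-- Adjacency via an edge. -/
def Adj (Γ : SGraph V E) (a b : V) : Prop := ∃ e, Γ.ends e = (a, b) ∨ Γ.ends e = (b, a)

/-- The set of connected components. -/
def Components (Γ : SGraph V E) : Type _ := Quot Γ.Adj

/-- The connected component of a vertex. -/
def comp (Γ : SGraph V E) (v : V) : Γ.Components := Quot.mk _ v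

/-- The number `k(Γ)` of connected components. -/
def kAll (Γ : SGraph V E) : ℕ := Nat.card Γ.Components

/-- A connected component is balanced if every cycle it contains is balanced. -/
def IsBalancedComponent (Γ : SGraph V E) (c : Γ.Components) : Prop :=
  ∀ v : V, Γ.comp v = c → ∀ W : Γ.Walk v v, Γ.IsCycle W → W.sgn = 1

/-- The number `k_b(Σ)` of balanced connected components. -/
def kb (Γ : SGraph V E) : ℕ := Nat.card {c : Γ.Components // Γ.IsBalancedComponent c}

/-- The number `k_u(Σ)` of unbalanced connected components. -/
def ku (Γ : SGraph V E) : ℕ := Nat.card {c : Γ.Components // ¬ Γ.IsBalancedComponent c}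

/-- A signed graph is balanced if all its cycles are balanced. -/
def Balanced (Γ : SGraph V E) : Prop :=
  ∀ (v : V) (W : Γ.Walk v v), Γ.IsCycle W → W.sgn = 1

/-- A signed graph is connected if it has exactly one connected component. -/
def Connected (Γ : SGraph V E) : Prop := Γ.kAll = 1

/-- The spanning subgraph `Σ \ Aᶜ` with edge set `A`. -/
def restrict (Γ : SGraph V E) (A : Set E) : SGraph V A :=
  { ends := fun e => Γ.ends e, sign := fun e => Γ.sign e }

/-- The signed Tutte polynomial (as a function of `x`, `y`, `z`):
`T_Σ(X,Y,Z) = Σ_{A⊆E} (X−1)^{k(Σ\Aᶜ)−k(Σ)} (Y−1)^{|A|−|V|+k_b(Σ\Aᶜ)} (Z−1)^{k_u(Σ\Aᶜ)}`. -/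
def signedTutte {K : Type*} [CommRing K] (Γ : SGraph V E) (x y z : K) : K :=
  ∑ᶠ A : Finset E,
    (x - 1) ^ ((Γ.restrict (A : Set E)).kAll - Γ.kAll) *
      (y - 1) ^ ((A.card + (Γ.restrict (A : Set E)).kb) - Nat.card V) *
        (z - 1) ^ (Γ.restrict (A : Set E)).ku

/-- Deletion of an edge. -/
def deleteEdge (Γ : SGraph V E) (e : E) : SGraph V {e' : E // e' ≠ e} :=
  { ends := fun e' => Γ.ends e'.1, sign := fun e' => Γ.sign e'.1 }

/-- The relation identifying the two endpoints of `e`. -/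
def contractRel (Γ : SGraph V E) (e : E) (a b : V) : Prop := (a, b) = Γ.ends e

/-- Contraction of an edge: the two endpoints are identified and the edge is
deleted.  (For a loop this is just deletion, as the identification is trivial.) -/
def contract (Γ : SGraph V E) (e : E) : SGraph (Quot (Γ.contractRel e)) {e' : E // e' ≠ e} :=
  { ends := fun e' => (Quot.mk _ (Γ.ends e'.1).1, Quot.mk _ (Γ.ends e'.1).2),
    sign := fun e' => Γ.sign e'.1 }

/-- `e` is a bridge: its deletion increases the number of connected components. -/
def IsBridge (Γ : SGraph V E) (e : E) : Prop := Γ.kAll < (Γ.deleteEdge e).kAll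

/-- An orientation of the half-edges, compatible with the signature. -/
def IsCompatible (Γ : SGraph V E) (ω : E → Bool → ℤˣ) : Prop :=
  ∀ e, Γ.sign e = -(ω e true * ω e false)

/-- A `G`-flow: Kirchhoff's law holds at every vertex. -/
def IsFlow (Γ : SGraph V E) (ω : E → Bool → ℤˣ) {G : Type*} [AddCommGroup G]
    (f : E → G) : Prop :=
  ∀ v : V,
    (∑ᶠ e : E, ((if Γ.endpt e true = v then (ω e true : ℤ) • f e else 0) +
      (if Γ.endpt e false = v then (ω e false : ℤ) • f e else 0))) = 0

/-- A `G`-tension: the alternating sum along every circuit walk vanishes. -/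
def IsTension (Γ : SGraph V E) (ω : E → Bool → ℤˣ) {G : Type*} [AddCommGroup G]
    (f : E → G) : Prop :=
  ∀ (v : V) (W : Γ.Walk v v), Γ.IsCircuitWalk W → W.tensionSum ω f = 0

end SGraph

/-- The doubling homomorphism `x ↦ x + x = 2x` of an abelian group. -/
def doubleHom (G : Type*) [AddCommGroup G] : G →+ G :=
  AddMonoidHom.mk' (fun x => x + x) (fun a b => add_add_add_comm a b a b)

/-- The subgroup `2G = {2x : x ∈ G}`. -/
def twoG (G : Type*) [AddCommGroup G] : AddSubgroup G := (doubleHom G).range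

/-- The `2`-torsion subgroup `G₂ = {x ∈ G : 2x = 0}`. -/
def torsion2 (G : Type*) [AddCommGroup G] : AddSubgroup G := (doubleHom G).ker

namespace SGraph

variable {V E : Type*}

/-- A `G`-potential difference: a `G`-tension whose sum around every unbalanced
cycle lies in `2G`. -/
def IsPotentialDifference (Γ : SGraph V E) (ω : E → Bool → ℤˣ) {G : Type*} [AddCommGroup G]
    (f : E → G) : Prop :=
  Γ.IsTension ω f ∧
    ∀ (v : V) (W : Γ.Walk v v), Γ.IsUnbalancedCycle W → W.edgeSum f ∈ twoG G

end SGraph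

namespace SGraph

variable {V E : Type*}

/-- Proper coloring by elements of a set `X` with involution `ι`: adjacent
endpoints of a positive edge get different colors, and for a negative edge the
`ι`-image of one endpoint's color differs from the other endpoint's color. -/
def IsProperInvColoring (Γ : SGraph V E) {X : Type*} (ι : X → X) (f : V → X) : Prop :=
  ∀ e : E, (Γ.sign e = 1 → f ((Γ.ends e).1) ≠ f ((Γ.ends e).2)) ∧
    (Γ.sign e = -1 → ι (f ((Γ.ends e).1)) ≠ f ((Γ.ends e).2))

/-- A proper `G`-coloring: for every edge `e = uv`, `f(u) ≠ f(v)` if `e` is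
positive and `-f(u) ≠ f(v)` if `e` is negative, i.e. `σ(e)•f(u) ≠ f(v)`. -/
def IsProperColoring (Γ : SGraph V E) {G : Type*} [AddCommGroup G] (f : V → G) : Prop :=
  ∀ e : E, ((Γ.sign e : ℤ) • f ((Γ.ends e).1)) ≠ f ((Γ.ends e).2)

/-- Zaslavsky's proper `n`-coloring: colors in `{0, ±1, …, ±n}` with
`f(u) ≠ σ(e)·f(v)` for every edge `e = uv`. -/
def IsProperNColoring (Γ : SGraph V E) (n : ℕ) (f : V → ℤ) : Prop :=
  (∀ v, |f v| ≤ (n : ℤ)) ∧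
    ∀ e : E, f ((Γ.ends e).1) ≠ (Γ.sign e : ℤ) * f ((Γ.ends e).2)

/-- `T ⊆ E` is a spanning tree: the spanning subgraph `(V,T)` is connected and
contains no cycle. -/
def IsSpanningTree (Γ : SGraph V E) (T : Set E) : Prop :=
  (Γ.restrict T).Connected ∧
    ∀ (v : V) (W : (Γ.restrict T).Walk v v), ¬ (Γ.restrict T).IsCycle W

/-- A connected basis of a connected signed graph: a spanning tree if `Σ` is
balanced; otherwise a spanning tree plus one extra edge closing an unbalanced
cycle. -/
def IsConnectedBasis (Γ : SGraph V E) (B : Set E) : Prop :=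
  (Γ.Balanced ∧ Γ.IsSpanningTree B) ∨
    (¬ Γ.Balanced ∧ ∃ (T : Set E) (e : E), Γ.IsSpanningTree T ∧ e ∉ T ∧ B = insert e T ∧
      ∀ (v : V) (W : (Γ.restrict B).Walk v v), (Γ.restrict B).IsCycle W → W.sgn = -1)

/-- Switching at a vertex `v`: the sign of every non-loop edge incident with `v`
is negated; loops keep their sign. -/
def switchAt (Γ : SGraph V E) (v : V) : SGraph V E :=
  { ends := Γ.ends,
    sign := fun e => if ((Γ.ends e).1 = v ↔ (Γ.ends e).2 = v) then Γ.sign e else -Γ.sign e }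

/-- Switching at a set `S` of vertices (the composite of the switchings at the
vertices of `S`): the sign of an edge is negated iff exactly one of its
endpoints lies in `S`. -/
def switchSet (Γ : SGraph V E) (S : Set V) : SGraph V E :=
  { ends := Γ.ends,
    sign := fun e => if ((Γ.ends e).1 ∈ S ↔ (Γ.ends e).2 ∈ S) then Γ.sign e else -Γ.sign e }

/-- Isomorphism of signed graphs (as undirected signed multigraphs). -/
def Iso {V₁ E₁ V₂ E₂ : Type*} (Γ₁ : SGraph V₁ E₁) (Γ₂ : SGraph V₂ E₂) : Prop :=
  ∃ (φ : V₁ ≃ V₂) (ψ : E₁ ≃ E₂), ∀ e : E₁,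
    (Γ₂.ends (ψ e) = (φ (Γ₁.ends e).1, φ (Γ₁.ends e).2) ∨
      Γ₂.ends (ψ e) = (φ (Γ₁.ends e).2, φ (Γ₁.ends e).1)) ∧
    Γ₂.sign (ψ e) = Γ₁.sign e

/-- Switching equivalence: isomorphism after switching at a set of vertices. -/
def SwitchEquiv {V₁ E₁ V₂ E₂ : Type*} (Γ₁ : SGraph V₁ E₁) (Γ₂ : SGraph V₂ E₂) : Prop :=
  ∃ S : Set V₁, Iso (Γ₁.switchSet S) Γ₂

/-- Disjoint union of signed graphs. -/
def disjUnion {V₁ E₁ V₂ E₂ : Type*} (Γ₁ : SGraph V₁ E₁) (Γ₂ : SGraph V₂ E₂) :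
    SGraph (V₁ ⊕ V₂) (E₁ ⊕ E₂) where
  ends := fun e => match e with
    | .inl e => (Sum.inl (Γ₁.ends e).1, Sum.inl (Γ₁.ends e).2)
    | .inr e => (Sum.inr (Γ₂.ends e).1, Sum.inr (Γ₂.ends e).2)
  sign := fun e => match e with
    | .inl e => Γ₁.sign e
    | .inr e => Γ₂.sign e

/-- The difference operator `δ : G^V → G^E`,
`(δg)(e) = ω(v,e)·g(v) + ω(u,e)·g(u)` for `e = uv`. -/
def deltaHom (Γ : SGraph V E) (ω : E → Bool → ℤˣ) (G : Type*) [AddCommGroup G] :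
    (V → G) →+ (E → G) :=
  AddMonoidHom.mk'
    (fun g e => (ω e true : ℤ) • g ((Γ.ends e).1) + (ω e false : ℤ) • g ((Γ.ends e).2))
    (by
      intro a b
      funext e
      simp only [Pi.add_apply, smul_add]
      abel)

end SGraph

end SignedGraphs

noncomputable section Aux

namespace SGraph

variable {V E : Type*} {Γ : SGraph V E}

namespace Walk

@[simp] lemma verts_nil (x : V) : (Walk.nil (Γ := Γ) x).verts = [x] := rfl

@[simp] lemma verts_cons (e : E) (d : Bool) {w : V} (p : Γ.Walk (Γ.endpt e (!d)) w) :
    (Walk.cons e d p).verts = Γ.endpt e d :: p.verts := rfl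

@[simp] lemma edges_nil (x : V) : (Walk.nil (Γ := Γ) x).edges = [] := rfl

@[simp] lemma edges_cons (e : E) (d : Bool) {w : V} (p : Γ.Walk (Γ.endpt e (!d)) w) :
    (Walk.cons e d p).edges = e :: p.edges := rfl

@[simp] lemma sgn_nil (x : V) : (Walk.nil (Γ := Γ) x).sgn = 1 := rfl

@[simp] lemma sgn_cons (e : E) (d : Bool) {w : V} (p : Γ.Walk (Γ.endpt e (!d)) w) :
    (Walk.cons e d p).sgn = Γ.sign e * p.sgn := rfl

@[simp] lemma nil_append {v w : V} (q : Γ.Walk v w) :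
    (Walk.nil v).append q = q := rfl

@[simp] lemma cons_append (e : E) (d : Bool) {v w : V} (p : Γ.Walk (Γ.endpt e (!d)) v)
    (q : Γ.Walk v w) : (Walk.cons e d p).append q = Walk.cons e d (p.append q) := rfl

lemma verts_ne_nil {u v : V} (W : Γ.Walk u v) : W.verts ≠ [] := by
  cases W <;> simp

@[simp] lemma srcs_nil (x : V) : (Walk.nil (Γ := Γ) x).srcs = ([] : List V) := rfl

@[simp] lemma srcs_cons (e : E) (d : Bool) {w : V} (p : Γ.Walk (Γ.endpt e (!d)) w) :
    (Walk.cons e d p).srcs = Γ.endpt e d :: p.srcs := by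
  unfold srcs
  rw [verts_cons, List.dropLast_cons_of_ne_nil (verts_ne_nil p)]

lemma verts_append {u v w : V} (P : Γ.Walk u v) (Q : Γ.Walk v w) :
    (P.append Q).verts = P.srcs ++ Q.verts := by
  induction P with
  | nil => simp
  | cons e d p ih => simp [ih]

lemma srcs_append {u v w : V} (P : Γ.Walk u v) (Q : Γ.Walk v w) :
    (P.append Q).srcs = P.srcs ++ Q.srcs := by
  unfold srcs
  rw [verts_append, List.dropLast_append_of_ne_nil (verts_ne_nil Q)]
  rfl

lemma edges_append {u v w : V} (P : Γ.Walk u v) (Q : Γ.Walk v w) :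
    (P.append Q).edges = P.edges ++ Q.edges := by
  induction P with
  | nil => simp
  | cons e d p ih => simp [ih]

lemma sgn_append {u v w : V} (P : Γ.Walk u v) (Q : Γ.Walk v w) :
    (P.append Q).sgn = P.sgn * Q.sgn := by
  induction P with
  | nil => simp
  | cons e d p ih => simp [ih, mul_assoc]

/-- Change the (propositionally equal) endpoints of a walk. -/
def copy {u v u' v' : V} (W : Γ.Walk u v) (hu : u = u') (hv : v = v') : Γ.Walk u' v' :=
  hu ▸ hv ▸ W

@[simp] lemma sgn_copy {u v u' v' : V} (W : Γ.Walk u v) (hu : u = u') (hv : v = v') :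
    (W.copy hu hv).sgn = W.sgn := by subst hu; subst hv; rfl

@[simp] lemma edges_copy {u v u' v' : V} (W : Γ.Walk u v) (hu : u = u') (hv : v = v') :
    (W.copy hu hv).edges = W.edges := by subst hu; subst hv; rfl

@[simp] lemma verts_copy {u v u' v' : V} (W : Γ.Walk u v) (hu : u = u') (hv : v = v') :
    (W.copy hu hv).verts = W.verts := by subst hu; subst hv; rfl

@[simp] lemma srcs_copy {u v u' v' : V} (W : Γ.Walk u v) (hu : u = u') (hv : v = v') :
    (W.copy hu hv).srcs = W.srcs := by subst hu; subst hv; rfl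

/-- The single-step walk along `e` in direction `d`. -/
def stepFwd (e : E) (d : Bool) : Γ.Walk (Γ.endpt e d) (Γ.endpt e (!d)) :=
  Walk.cons e d (Walk.nil _)

/-- The single-step walk along `e` against direction `d`. -/
def stepRev (e : E) (d : Bool) : Γ.Walk (Γ.endpt e (!d)) (Γ.endpt e d) :=
  match d with
  | true => Walk.cons e false (Walk.nil _)
  | false => Walk.cons e true (Walk.nil _)

@[simp] lemma sgn_stepFwd (e : E) (d : Bool) : (stepFwd (Γ := Γ) e d).sgn = Γ.sign e := by
  simp [stepFwd]

@[simp] lemma sgn_stepRev (e : E) (d : Bool) : (stepRev (Γ := Γ) e d).sgn = Γ.sign e := by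
  cases d <;> simp [stepRev]

/-- Reversal of a walk. -/
def reverse : ∀ {u v : V}, Γ.Walk u v → Γ.Walk v u
  | _, _, .nil x => .nil x
  | _, _, .cons e d p => p.reverse.append (stepRev e d)

@[simp] lemma sgn_reverse {u v : V} (W : Γ.Walk u v) : W.reverse.sgn = W.sgn := by
  induction W with
  | nil => rfl
  | cons e d p ih => rw [reverse, sgn_append, ih, sgn_stepRev, sgn_cons, mul_comm]

lemma sgn_eq_one_of_edges_eq_nil {u v : V} (W : Γ.Walk u v) (h : W.edges = []) :
    W.sgn = 1 := by
  cases W with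
  | nil => rfl
  | cons e d p => simp at h

lemma length_verts {u v : V} (W : Γ.Walk u v) :
    W.verts.length = W.edges.length + 1 := by
  induction W with
  | nil => simp
  | cons e d p ih => simp [ih]

lemma length_srcs {u v : V} (W : Γ.Walk u v) :
    W.srcs.length = W.edges.length := by
  unfold srcs
  rw [List.length_dropLast, length_verts]
  simp

end Walk

open Walk

/-- Reachability by a walk. -/
def Reach (Γ : SGraph V E) (u v : V) : Prop := Nonempty (Γ.Walk u v)

lemma Reach.rfl {u : V} : Γ.Reach u u := ⟨.nil u⟩

lemma Reach.trans {u v w : V} (h : Γ.Reach u v) (h' : Γ.Reach v w) : Γ.Reach u w :=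
  ⟨h.some.append h'.some⟩

lemma Reach.symm {u v : V} (h : Γ.Reach u v) : Γ.Reach v u := ⟨h.some.reverse⟩

lemma reach_of_adj {a b : V} (h : Γ.Adj a b) : Γ.Reach a b := by
  obtain ⟨e, h | h⟩ := h
  · have ha : Γ.endpt e true = a := by simp [endpt, h]
    have hb : Γ.endpt e false = b := by simp [endpt, h]
    rw [← ha, ← hb]
    exact ⟨stepFwd e true⟩
  · have ha : Γ.endpt e false = a := by simp [endpt, h]
    have hb : Γ.endpt e true = b := by simp [endpt, h]
    rw [← ha, ← hb]
    exact ⟨stepFwd e false⟩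

lemma adj_endpt (e : E) (d : Bool) : Γ.Adj (Γ.endpt e d) (Γ.endpt e (!d)) := by
  cases d
  · exact ⟨e, Or.inr rfl⟩
  · exact ⟨e, Or.inl rfl⟩

lemma comp_eq_of_reach {a b : V} (h : Γ.Reach a b) : Γ.comp a = Γ.comp b := by
  obtain ⟨W⟩ := h
  induction W with
  | nil => rfl
  | cons e d p ih => exact (Quot.sound (adj_endpt e d)).trans ih

lemma reach_of_comp_eq {a b : V} (h : Γ.comp a = Γ.comp b) : Γ.Reach a b := by
  have h' : Relation.EqvGen Γ.Adj a b := Quot.eq.mp h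
  clear h
  induction h' with
  | rel a b hab => exact reach_of_adj hab
  | refl a => exact Reach.rfl
  | symm a b _ ih => exact Reach.symm ih
  | trans a b c _ _ ih ih' => exact Reach.trans ih ih'

lemma reach_of_mem_verts {u v x : V} (W : Γ.Walk u v) (hx : x ∈ W.verts) :
    Γ.Reach u x := by
  induction W with
  | nil => simp at hx; exact hx ▸ Reach.rfl
  | cons e d p ih =>
    rw [verts_cons, List.mem_cons] at hx
    rcases hx with rfl | hx
    · exact Reach.rfl
    · exact Reach.trans ⟨stepFwd e d⟩ (ih hx)

lemma start_mem_verts {u v : V} (W : Γ.Walk u v) : u ∈ W.verts := by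
  cases W <;> simp

lemma srcs_subset_verts {u v : V} (W : Γ.Walk u v) : W.srcs ⊆ W.verts :=
  List.dropLast_subset _

lemma mem_verts_of_mem_edges {u v : V} (W : Γ.Walk u v) {e : E} (he : e ∈ W.edges) :
    ∀ d : Bool, Γ.endpt e d ∈ W.verts := by
  induction W with
  | nil => simp at he
  | cons e' d' p ih =>
    intro d
    rw [edges_cons, List.mem_cons] at he
    rw [verts_cons, List.mem_cons]
    rcases he with rfl | he
    · rcases Bool.eq_or_eq_not d d' with rfl | rfl
      · exact Or.inl rfl
      · exact Or.inr (start_mem_verts p)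
    · exact Or.inr (ih he d)

/-- Split a walk at the first occurrence of a vertex among its step sources. -/
lemma exists_split_at_vertex :
    ∀ {u v : V} (W : Γ.Walk u v) {x : V}, x ∈ W.srcs →
      ∃ (P : Γ.Walk u x) (Q : Γ.Walk x v), W = P.append Q ∧ x ∉ P.srcs ∧ Q.edges ≠ [] ∧
        P.edges.length + Q.edges.length = W.edges.length := by
  intro u v W
  induction W with
  | nil => intro x hx; simp at hx
  | cons e d p ih =>
    intro x hx
    by_cases hxu : x = Γ.endpt e d
    · subst hxu
      exact ⟨.nil _, .cons e d p, rfl, by simp, by simp, by simp⟩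
    · rw [srcs_cons, List.mem_cons] at hx
      rcases hx with h | hx
      · exact absurd h hxu
      · obtain ⟨P', Q', hW, hxP, hQ, hlen⟩ := ih hx
        refine ⟨.cons e d P', Q', by rw [cons_append, ← hW], ?_, hQ, by simp [← hlen]; omega⟩
        rw [srcs_cons, List.mem_cons]
        push_neg
        exact ⟨hxu, hxP⟩

/-- Split a walk at the first occurrence of an edge. -/
lemma exists_split_at_edge :
    ∀ {u v : V} (W : Γ.Walk u v) {e₀ : E}, e₀ ∈ W.edges →
      ∃ (d : Bool) (P : Γ.Walk u (Γ.endpt e₀ d)) (Q : Γ.Walk (Γ.endpt e₀ (!d)) v),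
        W = P.append (.cons e₀ d Q) ∧ e₀ ∉ P.edges ∧
          P.edges.length + Q.edges.length + 1 = W.edges.length := by
  intro u v W
  induction W with
  | nil => intro e₀ h; simp at h
  | cons e d p ih =>
    intro e₀ h
    by_cases he : e₀ = e
    · subst he
      exact ⟨d, .nil _, p, rfl, by simp, by simp⟩
    · rw [edges_cons, List.mem_cons] at h
      rcases h with h | h
      · exact absurd h he
      · obtain ⟨d', P', Q', hW, heP, hlen⟩ := ih h
        refine ⟨d', .cons e d P', Q', by rw [cons_append, ← hW], ?_, by simp [← hlen]; omega⟩
        rw [edges_cons, List.mem_cons]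
        push_neg
        exact ⟨he, heP⟩

lemma start_mem_srcs {u v : V} (W : Γ.Walk u v) (h : W.edges ≠ []) : u ∈ W.srcs := by
  cases W with
  | nil => simp at h
  | cons e d p => rw [srcs_cons]; exact List.mem_cons_self

lemma sign_mul_self (e : E) : Γ.sign e * Γ.sign e = 1 := Int.units_mul_self _

/-- Excise an immediately repeated edge from a walk with no repeated sources. -/
lemma exists_excise :
    ∀ {u v : V} (W : Γ.Walk u v), W.srcs.Nodup → ¬ W.edges.Nodup →
      ∃ W' : Γ.Walk u v, W'.sgn = W.sgn ∧ W'.edges.length + 2 = W.edges.length := by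
  intro u v W
  induction W with
  | nil => intro _ h; simp at h
  | cons e d p ih =>
    intro hs hd
    rw [srcs_cons, List.nodup_cons] at hs
    by_cases he : e ∈ p.edges
    · obtain ⟨d', S, T, hp, heS, hlen⟩ := exists_split_at_edge p he
      have hpsrc : p.srcs = S.srcs ++ (Γ.endpt e d' :: T.srcs) := by
        rw [hp, srcs_append, srcs_cons]
      have hdd : d' = !d := by
        rcases Bool.eq_or_eq_not d' d with rfl | rfl
        · exact absurd (by rw [hpsrc]; simp) hs.1
        · rfl
      subst hdd
      have hSnil : S.edges = [] := by
        by_contra hS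
        have h1 : Γ.endpt e (!d) ∈ S.srcs := start_mem_srcs S hS
        have h2 := hs.2
        rw [hpsrc, List.nodup_append] at h2
        exact h2.2.2 _ h1 _ List.mem_cons_self rfl
      refine ⟨T.copy (congrArg (Γ.endpt e) (Bool.not_not d)) rfl, ?_, ?_⟩
      · rw [sgn_copy, sgn_cons, hp, sgn_append, sgn_eq_one_of_edges_eq_nil S hSnil,
          sgn_cons, one_mul, ← mul_assoc, sign_mul_self, one_mul]
      · have h3 : S.edges.length = 0 := by rw [hSnil]; rfl
        rw [edges_copy, edges_cons]
        simp only [List.length_cons]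
        omega
    · have hnd : ¬ p.edges.Nodup := fun h => hd (List.nodup_cons.mpr ⟨he, h⟩)
      obtain ⟨p', hsgn, hlen⟩ := ih hs.2 hnd
      refine ⟨.cons e d p', by simp [hsgn], by simp only [edges_cons, List.length_cons]; omega⟩

/-- Every unbalanced closed walk contains an unbalanced cycle (at a vertex
reachable from its base point). -/
lemma exists_unbalanced_cycle :
    ∀ (n : ℕ) {u : V} (W : Γ.Walk u u), W.edges.length ≤ n → W.sgn = -1 →
      ∃ (x : V) (C : Γ.Walk x x), Γ.IsCycle C ∧ C.sgn = -1 ∧ Γ.Reach u x := by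
  intro n
  induction n with
  | zero =>
    intro u W hlen hsgn
    rw [Nat.le_zero, List.length_eq_zero_iff] at hlen
    rw [sgn_eq_one_of_edges_eq_nil W hlen] at hsgn
    exact absurd hsgn (by decide)
  | succ n ih =>
    intro u W hlen hsgn
    by_cases hsrc : W.srcs.Nodup
    · by_cases hed : W.edges.Nodup
      · refine ⟨u, W, ⟨?_, hsrc, hed⟩, hsgn, Reach.rfl⟩
        intro h
        rw [sgn_eq_one_of_edges_eq_nil W h] at hsgn
        exact absurd hsgn (by decide)
      · obtain ⟨W', hsgn', hlen'⟩ := exists_excise W hsrc hed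
        exact ih W' (by omega) (by rw [hsgn']; exact hsgn)
    · obtain ⟨x, hdup⟩ := List.exists_duplicate_iff_not_nodup.mpr hsrc
      have hx : x ∈ W.srcs := hdup.mem
      have hcount : 2 ≤ W.srcs.count x := List.duplicate_iff_two_le_count.mp hdup
      obtain ⟨P, Q, hW, hxP, hQne, hlen1⟩ := exists_split_at_vertex W hx
      have hsrcsW : W.srcs = P.srcs ++ Q.srcs := by rw [hW, srcs_append]
      have hcQ : 2 ≤ Q.srcs.count x := by
        rw [hsrcsW, List.count_append] at hcount
        have h0 : P.srcs.count x = 0 := List.count_eq_zero.mpr hxP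
        omega
      cases Q with
      | nil => simp at hcQ
      | cons e d q =>
        rw [srcs_cons, List.count_cons_self] at hcQ
        have hq : Γ.endpt e d ∈ q.srcs := by
          rw [← List.count_pos_iff]
          omega
        obtain ⟨S, T, hq', hxS, hTne, hlen2⟩ := exists_split_at_vertex q hq
        have hTpos : 1 ≤ T.edges.length := List.length_pos_iff.mpr hTne
        have hWlen : P.edges.length + 1 + S.edges.length + T.edges.length
            = W.edges.length := by
          rw [← hlen1, edges_cons, List.length_cons]
          omega
        have hprod : ((Walk.cons e d S).sgn) * ((P.append T).sgn) = W.sgn := by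
          rw [hW, hq']
          simp only [sgn_append, sgn_cons]
          ac_rfl
        rcases Int.units_eq_one_or (Walk.cons e d S).sgn with h1 | h1
        · have h2 : (P.append T).sgn = -1 := by
            rw [h1, one_mul] at hprod
            rw [hprod]; exact hsgn
          have hlenPT : (P.append T).edges.length ≤ n := by
            rw [edges_append, List.length_append]; omega
          exact ih (P.append T) hlenPT h2
        · have hlenS : (Walk.cons e d S).edges.length ≤ n := by
            rw [edges_cons, List.length_cons]; omega
          obtain ⟨y, C, hC, hCs, hR⟩ := ih (Walk.cons e d S) hlenS h1
          exact ⟨y, C, hC, hCs, Reach.trans ⟨P⟩ hR⟩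

lemma sgn_eq_one_of_balanced {c : Γ.Components} (hc : Γ.IsBalancedComponent c)
    {x y : V} (W : Γ.Walk x y) (hxy : x = y) (hx : Γ.comp x = c) : W.sgn = 1 := by
  subst hxy
  rcases Int.units_eq_one_or W.sgn with h | h
  · exact h
  · obtain ⟨z, C, hCc, hCs, hR⟩ := exists_unbalanced_cycle W.edges.length W le_rfl h
    have hz : Γ.comp z = c := by rw [← comp_eq_of_reach hR, hx]
    rw [hc z hz C hCc] at hCs
    exact absurd hCs (by decide)

lemma sign_val_mul_self (e : E) : (Γ.sign e : ℤ) * (Γ.sign e : ℤ) = 1 := by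
  rw [← Units.val_mul, sign_mul_self, Units.val_one]

/-- A coloring satisfying all edge equations propagates along walks via the sign. -/
lemma eq_sgn_smul_of_sat {G : Type*} [AddCommGroup G] (f : V → G)
    (hf : ∀ e : E, (Γ.sign e : ℤ) • f (Γ.ends e).1 = f (Γ.ends e).2) :
    ∀ {x y : V} (P : Γ.Walk x y), f y = (P.sgn : ℤ) • f x := by
  intro x y P
  induction P with
  | nil => simp
  | cons e d p ih =>
    have hstep : f (Γ.endpt e (!d)) = (Γ.sign e : ℤ) • f (Γ.endpt e d) := by
      cases d
      · have h1 : (Γ.sign e : ℤ) • f (Γ.ends e).2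
            = (Γ.sign e : ℤ) • ((Γ.sign e : ℤ) • f (Γ.ends e).1) := by rw [hf e]
        rw [smul_smul, sign_val_mul_self, one_smul] at h1
        exact h1.symm
      · exact (hf e).symm
    rw [ih, hstep, smul_smul, sgn_cons, Units.val_mul, mul_comm]

end SGraph

lemma mem_torsion2_iff {G : Type*} [AddCommGroup G] {x : G} :
    x ∈ torsion2 G ↔ x + x = 0 := by
  rw [torsion2, AddMonoidHom.mem_ker]
  constructor <;> intro h <;> exact h

lemma smul_of_self_add_self_eq_zero {G : Type*} [AddCommGroup G] {x : G}
    (hx : x + x = 0) (ε : ℤˣ) : (ε : ℤ) • x = x := by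
  rcases Int.units_eq_one_or ε with rfl | rfl
  · simp
  · simpa using neg_eq_of_add_eq_zero_left hx

lemma units_solve {a b c : ℤˣ} (h : b * (a * c) = 1) : a * b = c := by
  rcases Int.units_eq_one_or a with rfl | rfl <;>
    rcases Int.units_eq_one_or b with rfl | rfl <;>
      rcases Int.units_eq_one_or c with rfl | rfl <;> first | rfl | simpa using h

lemma card_twoG_mul (G : Type*) [AddCommGroup G] :
    Nat.card (↥(twoG G)) * Nat.card (↥(torsion2 G)) = Nat.card G := by
  have h1 : Nat.card (↥(twoG G)) = Nat.card (G ⧸ torsion2 G) :=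
    (Nat.card_congr (QuotientAddGroup.quotientKerEquivRange (doubleHom G)).toEquiv).symm
  rw [h1, ← AddSubgroup.card_eq_card_quotient_mul_card_addSubgroup (torsion2 G)]

namespace SGraph

variable {V E : Type*} {Γ : SGraph V E}

lemma comp_out (Γ : SGraph V E) (c : Γ.Components) : Γ.comp (Quot.out c) = c :=
  Quot.out_eq c

/-- A canonical walk from the chosen representative of a component to a vertex. -/
def walkToRep (Γ : SGraph V E) (v : V) : Γ.Walk (Quot.out (Γ.comp v)) v :=
  (reach_of_comp_eq (Γ.comp_out (Γ.comp v))).some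

/-- The value assigned to components by a pair of colorings of the balanced and
unbalanced components. -/
def colorVal (Γ : SGraph V E) (G : Type*) [AddCommGroup G]
    (gp : ({c : Γ.Components // Γ.IsBalancedComponent c} → G) ×
      ({c : Γ.Components // ¬ Γ.IsBalancedComponent c} → ↥(torsion2 G)))
    (c : Γ.Components) : G :=
  if h : Γ.IsBalancedComponent c then gp.1 ⟨c, h⟩ else (gp.2 ⟨c, h⟩ : G)

lemma colorVal_add_self (G : Type*) [AddCommGroup G] (gp) (c : Γ.Components)
    (hc : ¬ Γ.IsBalancedComponent c) :
    colorVal Γ G gp c + colorVal Γ G gp c = 0 := by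
  rw [colorVal, dif_neg hc]
  exact mem_torsion2_iff.mp (gp.2 ⟨c, hc⟩).2

/-- The coloring determined by component data. -/
def colorOf (Γ : SGraph V E) (G : Type*) [AddCommGroup G]
    (gp : ({c : Γ.Components // Γ.IsBalancedComponent c} → G) ×
      ({c : Γ.Components // ¬ Γ.IsBalancedComponent c} → ↥(torsion2 G))) (v : V) : G :=
  ((Γ.walkToRep v).sgn : ℤ) • colorVal Γ G gp (Γ.comp v)

lemma colorOf_sat (G : Type*) [AddCommGroup G] (gp) (e : E) :
    (Γ.sign e : ℤ) • colorOf Γ G gp (Γ.ends e).1 = colorOf Γ G gp (Γ.ends e).2 := by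
  have hc : Γ.comp (Γ.ends e).1 = Γ.comp (Γ.ends e).2 :=
    comp_eq_of_reach ⟨Walk.stepFwd e true⟩
  rw [colorOf, colorOf]
  have hvv : colorVal Γ G gp (Γ.comp (Γ.ends e).1)
      = colorVal Γ G gp (Γ.comp (Γ.ends e).2) := by rw [hc]
  rw [hvv]
  set X := colorVal Γ G gp (Γ.comp (Γ.ends e).2) with hX
  by_cases hb : Γ.IsBalancedComponent (Γ.comp (Γ.ends e).2)
  · have hK : ((Γ.walkToRep (Γ.ends e).1).append
        ((Walk.stepFwd e true).append (Γ.walkToRep (Γ.ends e).2).reverse)).sgn = 1 := by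
      refine sgn_eq_one_of_balanced hb _ (by rw [hc]) ?_
      rw [Γ.comp_out, hc]
    have hK : (Γ.walkToRep (Γ.ends e).1).sgn * (Γ.sign e * (Γ.walkToRep (Γ.ends e).2).sgn)
        = 1 := by
      have h6 := Walk.sgn_append (Γ.walkToRep (Γ.ends e).1)
        ((Walk.stepFwd e true).append (Γ.walkToRep (Γ.ends e).2).reverse)
      have h7 := Walk.sgn_append (Walk.stepFwd (Γ := Γ) e true) (Γ.walkToRep (Γ.ends e).2).reverse
      have h8 := h7.trans (congrArg₂ (· * ·) (Walk.sgn_stepFwd (Γ := Γ) e true)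
        (Walk.sgn_reverse (Γ.walkToRep (Γ.ends e).2)))
      exact (h6.trans (congrArg _ h8)).symm.trans hK
    have h4 : Γ.sign e * (Γ.walkToRep (Γ.ends e).1).sgn = (Γ.walkToRep (Γ.ends e).2).sgn :=
      units_solve hK
    rw [smul_smul, ← Units.val_mul, h4]
  · rw [smul_of_self_add_self_eq_zero (colorVal_add_self G gp _ hb),
      smul_of_self_add_self_eq_zero (colorVal_add_self G gp _ hb),
      smul_of_self_add_self_eq_zero (colorVal_add_self G gp _ hb)]

lemma unbal_rep_add_self {G : Type*} [AddCommGroup G] (f : V → G)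
    (hf : ∀ e : E, (Γ.sign e : ℤ) • f (Γ.ends e).1 = f (Γ.ends e).2)
    (c : Γ.Components) (hc : ¬ Γ.IsBalancedComponent c) :
    f (Quot.out c) + f (Quot.out c) = 0 := by
  rw [IsBalancedComponent] at hc
  push_neg at hc
  obtain ⟨v, hv, W, hW, hs⟩ := hc
  have hW1 : W.sgn = -1 := by
    rcases Int.units_eq_one_or W.sgn with h | h
    · exact absurd h hs
    · exact h
  have h1 : f v + f v = 0 := by
    have h2 := eq_sgn_smul_of_sat f hf W
    rw [hW1] at h2
    simp only [Units.val_neg, Units.val_one, neg_smul, one_smul] at h2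
    exact eq_neg_iff_add_eq_zero.mp h2
  have hreach : Γ.Reach v (Quot.out c) := reach_of_comp_eq (by rw [Γ.comp_out, hv])
  obtain ⟨P⟩ := hreach
  have h3 := eq_sgn_smul_of_sat f hf P
  rw [h3, ← smul_add, h1, smul_zero]

/-- The number of `G`-colorings satisfying all edge equations of a signed graph. -/
theorem card_sat [Finite V] (Γ : SGraph V E) (G : Type*) [AddCommGroup G] [Finite G] :
    Nat.card {f : V → G // ∀ e : E, (Γ.sign e : ℤ) • f (Γ.ends e).1 = f (Γ.ends e).2}
      = Nat.card G ^ Γ.kb * Nat.card (↥(torsion2 G)) ^ Γ.ku := by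
  haveI : Finite Γ.Components := Quot.finite _
  have key : {f : V → G // ∀ e : E, (Γ.sign e : ℤ) • f (Γ.ends e).1 = f (Γ.ends e).2}
      ≃ ({c : Γ.Components // Γ.IsBalancedComponent c} → G) ×
        ({c : Γ.Components // ¬ Γ.IsBalancedComponent c} → ↥(torsion2 G)) := by
    refine
      { toFun := fun fh => (fun c => fh.1 (Quot.out c.1),
          fun c => ⟨fh.1 (Quot.out c.1),
            mem_torsion2_iff.mpr (unbal_rep_add_self fh.1 fh.2 c.1 c.2)⟩),
        invFun := fun gp => ⟨colorOf Γ G gp, colorOf_sat G gp⟩,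
        left_inv := ?_, right_inv := ?_ }
    · rintro ⟨f, hf⟩
      refine Subtype.ext (funext fun v => ?_)
      have hval : colorVal Γ G (fun c => f (Quot.out c.1), fun c =>
          ⟨f (Quot.out c.1), mem_torsion2_iff.mpr (unbal_rep_add_self f hf c.1 c.2)⟩)
          (Γ.comp v) = f (Quot.out (Γ.comp v)) := by
        rw [colorVal]
        split <;> rfl
      show colorOf Γ G _ v = f v
      rw [colorOf, hval, ← eq_sgn_smul_of_sat f hf (Γ.walkToRep v)]
    · rintro ⟨g, h⟩
      have hcomp : ∀ c : Γ.Components, Γ.comp (Quot.out c) = c := fun c => Quot.out_eq c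
      refine Prod.ext (funext fun c => ?_) (funext fun c => ?_)
      · show colorOf Γ G (g, h) (Quot.out c.1) = g c
        have hval : colorVal Γ G (g, h) (Γ.comp (Quot.out c.1)) = g c := by
          rw [hcomp c.1, colorVal, dif_pos c.2]
        have hsgn : (Γ.walkToRep (Quot.out c.1)).sgn = 1 := by
          refine sgn_eq_one_of_balanced c.2 _ (by rw [hcomp c.1]) ?_
          rw [hcomp c.1, hcomp c.1]
        rw [colorOf, hval, hsgn]
        simp
      · refine Subtype.ext ?_
        show colorOf Γ G (g, h) (Quot.out c.1) = (h c : G)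
        have hval : colorVal Γ G (g, h) (Γ.comp (Quot.out c.1)) = (h c : G) := by
          rw [hcomp c.1, colorVal, dif_neg c.2]
        rw [colorOf, hval, smul_of_self_add_self_eq_zero (mem_torsion2_iff.mp (h c).2)]
  rw [Nat.card_congr key, Nat.card_prod, Nat.card_fun, Nat.card_fun]
  rfl

lemma adj_restrict_of_subset {S T : Set E} (hST : S ⊆ T) {a b : V}
    (h : (Γ.restrict S).Adj a b) : (Γ.restrict T).Adj a b := by
  obtain ⟨⟨f, hf⟩, h⟩ := h
  exact ⟨⟨f, hST hf⟩, h⟩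

lemma adj_of_adj_restrict {S : Set E} {a b : V} (h : (Γ.restrict S).Adj a b) :
    Γ.Adj a b := by
  obtain ⟨⟨f, hf⟩, h⟩ := h
  exact ⟨f, h⟩

/-- The map on components induced by enlarging the edge set. -/
def compMap (Γ : SGraph V E) {S T : Set E} (hST : S ⊆ T) :
    (Γ.restrict S).Components → (Γ.restrict T).Components :=
  Quot.lift (fun v => (Γ.restrict T).comp v)
    (fun _ _ hab => Quot.sound (adj_restrict_of_subset hST hab))

lemma compMap_eq_comp_out {S T : Set E} (hST : S ⊆ T) (c : (Γ.restrict S).Components) :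
    Γ.compMap hST c = (Γ.restrict T).comp (Quot.out c) := by
  conv_lhs => rw [← (Γ.restrict S).comp_out c]
  rfl

/-- The map on components induced by forgetting the edge restriction. -/
def compMapTop (Γ : SGraph V E) (S : Set E) : (Γ.restrict S).Components → Γ.Components :=
  Quot.lift (fun v => Γ.comp v) (fun _ _ hab => Quot.sound (adj_of_adj_restrict hab))

lemma kAll_le_card (Γ : SGraph V E) [Finite V] : Γ.kAll ≤ Nat.card V :=
  Nat.card_le_card_of_surjective (fun v => Γ.comp v) Quot.mk_surjective

lemma kAll_le_kAll_restrict (Γ : SGraph V E) [Finite V] (S : Set E) :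
    Γ.kAll ≤ (Γ.restrict S).kAll := by
  haveI : Finite (Γ.restrict S).Components := Quot.finite _
  refine Nat.card_le_card_of_surjective (Γ.compMapTop S) ?_
  intro c
  obtain ⟨v, rfl⟩ := Quot.mk_surjective c
  exact ⟨(Γ.restrict S).comp v, rfl⟩

lemma kb_add_ku (Γ : SGraph V E) [Finite V] : Γ.kb + Γ.ku = Γ.kAll := by
  haveI : Finite Γ.Components := Quot.finite _
  classical
  rw [kb, ku, kAll, ← Nat.card_sum,
    Nat.card_congr (Equiv.sumCompl Γ.IsBalancedComponent)]

lemma kb_of_isEmpty {F : Type*} [IsEmpty F] (Δ : SGraph V F) : Δ.kb = Nat.card V := by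
  have hbal : ∀ c, Δ.IsBalancedComponent c := by
    intro c v hv W hW
    exfalso
    rcases hWe : W.edges with _ | ⟨f, l⟩
    · exact hW.1 hWe
    · exact isEmptyElim f
  have hinj : Function.Injective (fun v => Δ.comp v) := by
    intro a b hab
    have h := Quot.eq.mp hab
    clear hab
    induction h with
    | rel a b hab => obtain ⟨f, _⟩ := hab; exact isEmptyElim f
    | refl a => rfl
    | symm a b _ ih => exact ih.symm
    | trans a b c _ _ ih ih' => exact ih.trans ih'
  have hequiv : Δ.Components ≃ V :=
    (Equiv.ofBijective (fun v => Δ.comp v) ⟨hinj, Quot.mk_surjective⟩).symm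
  rw [kb, Nat.card_congr ((Equiv.subtypeUnivEquiv hbal).trans hequiv)]

lemma exists_lower (S : Set E) (e₀ : E) :
    ∀ {x y : V} (W : (Γ.restrict (insert e₀ S)).Walk x y),
      (∀ f ∈ W.edges, (f : E) ≠ e₀) →
      ∃ W' : (Γ.restrict S).Walk x y, W'.sgn = W.sgn ∧ W'.verts = W.verts ∧
        W'.edges.map Subtype.val = W.edges.map Subtype.val := by
  intro x y W
  induction W with
  | nil x => exact fun _ => ⟨.nil x, rfl, rfl, rfl⟩
  | cons f d p ih =>
    intro hW
    have hf : (f : E) ∈ S := by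
      have h1 : (f : E) ≠ e₀ := hW f (by simp)
      rcases Set.mem_insert_iff.mp f.2 with h | h
      · exact absurd h h1
      · exact h
    obtain ⟨p', h1, h2, h3⟩ := ih (fun g hg => hW g (by simp [hg]))
    have hend : ∀ b : Bool, (Γ.restrict S).endpt ⟨(f : E), hf⟩ b
        = (Γ.restrict (insert e₀ S)).endpt f b := fun _ => rfl
    refine ⟨(Walk.cons (⟨(f : E), hf⟩ : ↥S) d (p'.copy (hend !d).symm rfl)).copy
      (hend d) rfl, ?_, ?_, ?_⟩
    · rw [Walk.sgn_copy, Walk.sgn_cons, Walk.sgn_copy, h1]; rfl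
    · rw [Walk.verts_copy, Walk.verts_cons, Walk.verts_copy, h2]; rfl
    · simp only [Walk.edges_copy, Walk.edges_cons, List.map_cons, h3]

/-- The `insRel` relation describing connectivity after inserting an edge. -/
def insRel (Γ : SGraph V E) (S : Set E) (e₀ : E) (a b : V) : Prop :=
  (Γ.restrict S).Reach a b ∨
    ((Γ.restrict S).Reach a (Γ.ends e₀).1 ∧ (Γ.restrict S).Reach (Γ.ends e₀).2 b) ∨
    ((Γ.restrict S).Reach a (Γ.ends e₀).2 ∧ (Γ.restrict S).Reach (Γ.ends e₀).1 b)

lemma insRel_of_comp_eq {S : Set E} {e₀ : E} {a b : V}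
    (h : (Γ.restrict (insert e₀ S)).comp a = (Γ.restrict (insert e₀ S)).comp b) :
    Γ.insRel S e₀ a b := by
  have h' := Quot.eq.mp h
  clear h
  induction h' with
  | rel a b hab =>
    obtain ⟨⟨f, hf⟩, hor⟩ := hab
    rcases Set.mem_insert_iff.mp hf with rfl | hfS
    · rcases hor with h | h
      · have ha : a = (Γ.ends f).1 := by
          have := congrArg Prod.fst h; exact this.symm
        have hb : b = (Γ.ends f).2 := by
          have := congrArg Prod.snd h; exact this.symm
        exact Or.inr (Or.inl ⟨ha ▸ Reach.rfl, hb ▸ Reach.rfl⟩)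
      · have hb : b = (Γ.ends f).1 := by
          have := congrArg Prod.fst h; exact this.symm
        have ha : a = (Γ.ends f).2 := by
          have := congrArg Prod.snd h; exact this.symm
        exact Or.inr (Or.inr ⟨ha ▸ Reach.rfl, hb ▸ Reach.rfl⟩)
    · exact Or.inl (reach_of_adj ⟨⟨f, hfS⟩, hor⟩)
  | refl a => exact Or.inl Reach.rfl
  | symm a b _ ih =>
    rcases ih with h | ⟨h1, h2⟩ | ⟨h1, h2⟩
    · exact Or.inl h.symm
    · exact Or.inr (Or.inr ⟨h2.symm, h1.symm⟩)
    · exact Or.inr (Or.inl ⟨h2.symm, h1.symm⟩)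
  | trans a b c _ _ ih ih' =>
    rcases ih with h1 | ⟨h1a, h1b⟩ | ⟨h1a, h1b⟩ <;>
      rcases ih' with h2 | ⟨h2a, h2b⟩ | ⟨h2a, h2b⟩
    · exact Or.inl (h1.trans h2)
    · exact Or.inr (Or.inl ⟨h1.trans h2a, h2b⟩)
    · exact Or.inr (Or.inr ⟨h1.trans h2a, h2b⟩)
    · exact Or.inr (Or.inl ⟨h1a, h1b.trans h2⟩)
    · exact Or.inr (Or.inl ⟨h1a, h2b⟩)
    · exact Or.inl (h1a.trans h2b)
    · exact Or.inr (Or.inr ⟨h1a, h1b.trans h2⟩)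
    · exact Or.inl (h1a.trans h2b)
    · exact Or.inr (Or.inr ⟨h1a, h2b⟩)

lemma isCycle_lower {S : Set E} {e₀ : E} {x : V}
    {W : (Γ.restrict (insert e₀ S)).Walk x x} {W' : (Γ.restrict S).Walk x x}
    (hW : (Γ.restrict (insert e₀ S)).IsCycle W)
    (hverts : W'.verts = W.verts)
    (hedges : W'.edges.map Subtype.val = W.edges.map Subtype.val) :
    (Γ.restrict S).IsCycle W' := by
  obtain ⟨hne, hnodup, hednd⟩ := hW
  have hsrcs : W'.srcs = W.srcs := by
    unfold Walk.srcs
    rw [hverts]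
  refine ⟨?_, by rw [hsrcs]; exact hnodup, ?_⟩
  · intro h
    apply hne
    rw [h] at hedges
    exact List.map_eq_nil_iff.mp hedges.symm
  · have h1 : (W'.edges.map Subtype.val).Nodup := by
      rw [hedges]
      exact hednd.map Subtype.val_injective
    exact h1.of_map _

lemma isBal_compMap_of_ne {S : Set E} {e₀ : E} {c : (Γ.restrict S).Components}
    (hbal : (Γ.restrict S).IsBalancedComponent c)
    (h1 : c ≠ (Γ.restrict S).comp (Γ.ends e₀).1)
    (h2 : c ≠ (Γ.restrict S).comp (Γ.ends e₀).2) :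
    (Γ.restrict (insert e₀ S)).IsBalancedComponent
      (Γ.compMap (Set.subset_insert e₀ S) c) := by
  intro x hx W hW
  have ha : (Γ.restrict S).comp (Quot.out c) = c := (Γ.restrict S).comp_out c
  have hxa : (Γ.restrict (insert e₀ S)).comp x
      = (Γ.restrict (insert e₀ S)).comp (Quot.out c) := by
    rw [hx, compMap_eq_comp_out]
  have hR := Γ.insRel_of_comp_eq hxa
  have hxc : (Γ.restrict S).comp x = c := by
    rcases hR with h | ⟨hxu, hva⟩ | ⟨hxv, hua⟩
    · rw [comp_eq_of_reach h, ha]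
    · exact absurd (by rw [← ha, comp_eq_of_reach hva.symm]) (Ne.symm h2)
    · exact absurd (by rw [← ha, comp_eq_of_reach hua.symm]) (Ne.symm h1)
  have hav : ∀ f ∈ W.edges, (f : E) ≠ e₀ := by
    intro f hfW hfe
    have hu₀ : (Γ.ends e₀).1 ∈ W.verts := by
      have h3 := mem_verts_of_mem_edges W hfW true
      rwa [show (Γ.restrict (insert e₀ S)).endpt f true = (Γ.ends e₀).1 by
        simp [endpt, restrict, hfe]] at h3
    have hru : (Γ.restrict (insert e₀ S)).Reach x (Γ.ends e₀).1 :=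
      reach_of_mem_verts W hu₀
    have hcu : (Γ.restrict (insert e₀ S)).comp (Γ.ends e₀).1
        = (Γ.restrict (insert e₀ S)).comp (Quot.out c) :=
      (comp_eq_of_reach hru).symm.trans hxa
    rcases Γ.insRel_of_comp_eq hcu with h | ⟨h3, h4⟩ | ⟨h3, h4⟩
    · exact h1 (by rw [← ha, ← comp_eq_of_reach h])
    · exact h2 (by rw [← ha, ← comp_eq_of_reach h4])
    · exact h1 (by rw [← ha, ← comp_eq_of_reach h4])
  obtain ⟨W', hsgn, hverts, hedges⟩ := Γ.exists_lower S e₀ W hav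
  rw [← hsgn]
  exact hbal x hxc W' (Γ.isCycle_lower hW hverts hedges)

lemma isBal_compMap_bridge {S : Set E} {e₀ : E}
    (hne : (Γ.restrict S).comp (Γ.ends e₀).1 ≠ (Γ.restrict S).comp (Γ.ends e₀).2)
    (hb1 : (Γ.restrict S).IsBalancedComponent ((Γ.restrict S).comp (Γ.ends e₀).1))
    (hb2 : (Γ.restrict S).IsBalancedComponent ((Γ.restrict S).comp (Γ.ends e₀).2)) :
    (Γ.restrict (insert e₀ S)).IsBalancedComponent
      (Γ.compMap (Set.subset_insert e₀ S) ((Γ.restrict S).comp (Γ.ends e₀).1)) := by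
  intro x hx W hW
  have hxu : (Γ.restrict (insert e₀ S)).comp x
      = (Γ.restrict (insert e₀ S)).comp (Γ.ends e₀).1 := by rw [hx]; rfl
  by_cases hav : ∀ f ∈ W.edges, (f : E) ≠ e₀
  · obtain ⟨W', hsgn, hverts, hedges⟩ := Γ.exists_lower S e₀ W hav
    rw [← hsgn]
    have hcyc := Γ.isCycle_lower hW hverts hedges
    rcases Γ.insRel_of_comp_eq hxu with h | ⟨h3, h4⟩ | ⟨h3, h4⟩
    · exact hb1 x (comp_eq_of_reach h) W' hcyc
    · exact hb1 x (comp_eq_of_reach h3) W' hcyc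
    · exact hb2 x (comp_eq_of_reach h3) W' hcyc
  · exfalso
    push_neg at hav
    obtain ⟨f, hfW, hfe⟩ := hav
    obtain ⟨fv, hfm⟩ := f
    simp only at hfe
    subst hfe
    obtain ⟨d, P, Q, hWsplit, hP, hlen⟩ := exists_split_at_edge W hfW
    have hQ : (⟨fv, hfm⟩ : ↥(insert fv S)) ∉ Q.edges := by
      have hnd := hW.2.2
      rw [hWsplit, Walk.edges_append, Walk.edges_cons, List.nodup_append] at hnd
      exact (List.nodup_cons.mp hnd.2.1).1
    have hPne : ∀ g ∈ P.edges, (g : E) ≠ fv := by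
      intro g hg hge
      exact hP (by rwa [show g = (⟨fv, hfm⟩ : ↥(insert fv S)) from Subtype.ext hge] at hg)
    have hQne : ∀ g ∈ Q.edges, (g : E) ≠ fv := by
      intro g hg hge
      exact hQ (by rwa [show g = (⟨fv, hfm⟩ : ↥(insert fv S)) from Subtype.ext hge] at hg)
    obtain ⟨P', hsP, hvP, heP⟩ := Γ.exists_lower S fv P hPne
    obtain ⟨Q', hsQ, hvQ, heQ⟩ := Γ.exists_lower S fv Q hQne
    cases d
    · -- P' : Walk x (ends).2 , Q' : Walk (ends).1 x
      have hc1 : (Γ.restrict S).comp x = (Γ.restrict S).comp (Γ.ends fv).2 :=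
        comp_eq_of_reach ⟨P'⟩
      have hc2 : (Γ.restrict S).comp (Γ.ends fv).1 = (Γ.restrict S).comp x :=
        comp_eq_of_reach ⟨Q'⟩
      exact hne (hc2.trans hc1)
    · have hc1 : (Γ.restrict S).comp x = (Γ.restrict S).comp (Γ.ends fv).1 :=
        comp_eq_of_reach ⟨P'⟩
      have hc2 : (Γ.restrict S).comp (Γ.ends fv).2 = (Γ.restrict S).comp x :=
        comp_eq_of_reach ⟨Q'⟩
      exact hne (hc1.symm.trans hc2.symm)

lemma kb_le_kb_insert (Γ : SGraph V E) [Finite V] (S : Set E) (e₀ : E) :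
    (Γ.restrict S).kb ≤ (Γ.restrict (insert e₀ S)).kb + 1 := by
  classical
  haveI : Finite (Γ.restrict S).Components := Quot.finite _
  haveI : Finite (Γ.restrict (insert e₀ S)).Components := Quot.finite _
  set π := Γ.compMap (Set.subset_insert e₀ S) with hπ
  have hπab : ∀ c c' : (Γ.restrict S).Components,
      c ≠ (Γ.restrict S).comp (Γ.ends e₀).2 → c' ≠ (Γ.restrict S).comp (Γ.ends e₀).2 →
      π c = π c' → c = c' := by
    intro c c' hc hc' hππ
    have h2 : (Γ.restrict (insert e₀ S)).comp (Quot.out c)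
        = (Γ.restrict (insert e₀ S)).comp (Quot.out c') := by
      rw [← compMap_eq_comp_out, ← compMap_eq_comp_out]
      exact hππ
    rcases Γ.insRel_of_comp_eq h2 with h | ⟨h3, h4⟩ | ⟨h3, h4⟩
    · rw [← (Γ.restrict S).comp_out c, ← (Γ.restrict S).comp_out c',
        comp_eq_of_reach h]
    · exact absurd (by rw [← (Γ.restrict S).comp_out c', comp_eq_of_reach h4.symm]) hc'
    · exact absurd (by rw [← (Γ.restrict S).comp_out c, comp_eq_of_reach h3]) hc
  set Φ : {c : (Γ.restrict S).Components // (Γ.restrict S).IsBalancedComponent c} →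
      {c : (Γ.restrict (insert e₀ S)).Components //
        (Γ.restrict (insert e₀ S)).IsBalancedComponent c} ⊕ Unit :=
    fun c => if h : c.1 ≠ (Γ.restrict S).comp (Γ.ends e₀).2 ∧
        (Γ.restrict (insert e₀ S)).IsBalancedComponent (π c.1)
      then Sum.inl ⟨π c.1, h.2⟩ else Sum.inr () with hΦ
  have hcase : ∀ c : {c : (Γ.restrict S).Components //
        (Γ.restrict S).IsBalancedComponent c},
      ¬(c.1 ≠ (Γ.restrict S).comp (Γ.ends e₀).2 ∧
        (Γ.restrict (insert e₀ S)).IsBalancedComponent (π c.1)) →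
      c.1 = (Γ.restrict S).comp (Γ.ends e₀).2 ∨
        (c.1 = (Γ.restrict S).comp (Γ.ends e₀).1 ∧
          ¬ (Γ.restrict (insert e₀ S)).IsBalancedComponent (π c.1)) := by
    intro c h
    rw [not_and_or, not_not] at h
    rcases h with h | h
    · exact Or.inl h
    · by_cases hv : c.1 = (Γ.restrict S).comp (Γ.ends e₀).2
      · exact Or.inl hv
      · refine Or.inr ⟨?_, h⟩
        by_contra hu
        exact h (Γ.isBal_compMap_of_ne c.2 hu hv)
  have hbridge : ∀ c c' : {c : (Γ.restrict S).Components //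
        (Γ.restrict S).IsBalancedComponent c},
      c.1 = (Γ.restrict S).comp (Γ.ends e₀).2 →
      c'.1 = (Γ.restrict S).comp (Γ.ends e₀).1 →
      ¬ (Γ.restrict (insert e₀ S)).IsBalancedComponent (π c'.1) → c = c' := by
    intro c c' hc hc' hnb
    refine Subtype.ext (hc.trans ?_)
    rw [hc']
    by_contra hne0
    have hne1 : (Γ.restrict S).comp (Γ.ends e₀).1 ≠ (Γ.restrict S).comp (Γ.ends e₀).2 :=
      fun h => hne0 h.symm
    have hbb := Γ.isBal_compMap_bridge hne1 (hc' ▸ c'.2) (hc ▸ c.2)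
    rw [← hc'] at hbb
    exact hnb hbb
  have hinj : Function.Injective Φ := by
    intro c c' h
    by_cases h1 : c.1 ≠ (Γ.restrict S).comp (Γ.ends e₀).2 ∧
        (Γ.restrict (insert e₀ S)).IsBalancedComponent (π c.1) <;>
      by_cases h2 : c'.1 ≠ (Γ.restrict S).comp (Γ.ends e₀).2 ∧
        (Γ.restrict (insert e₀ S)).IsBalancedComponent (π c'.1)
    · rw [hΦ] at h
      simp only [dif_pos h1, dif_pos h2, Sum.inl.injEq, Subtype.mk.injEq] at h
      exact Subtype.ext (hπab c.1 c'.1 h1.1 h2.1 h)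
    · rw [hΦ] at h; simp only [dif_pos h1, dif_neg h2] at h; exact absurd h (by simp)
    · rw [hΦ] at h; simp only [dif_neg h1, dif_pos h2] at h; exact absurd h (by simp)
    · rcases hcase c h1 with hc | ⟨hc, hnb⟩ <;> rcases hcase c' h2 with hc' | ⟨hc', hnb'⟩
      · exact Subtype.ext (hc.trans hc'.symm)
      · exact hbridge c c' hc hc' hnb'
      · exact (hbridge c' c hc' hc hnb).symm
      · exact Subtype.ext (hc.trans hc'.symm)
  have hcard := Nat.card_le_card_of_injective Φ hinj
  rw [Nat.card_sum] at hcard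
  simpa [kb] using hcard

lemma card_le_card_add_kb (Γ : SGraph V E) [Finite V] (A : Finset E) :
    Nat.card V ≤ A.card + (Γ.restrict (A : Set E)).kb := by
  classical
  induction A using Finset.induction_on with
  | empty =>
    rw [Finset.card_empty, Finset.coe_empty, zero_add]
    haveI : IsEmpty (↥(∅ : Set E)) := Set.isEmpty_coe_sort.mpr rfl
    exact le_of_eq (kb_of_isEmpty _).symm
  | @insert e₀ A' he ih =>
    rw [Finset.coe_insert, Finset.card_insert_of_notMem he]
    have h2 := Γ.kb_le_kb_insert (A' : Set E) e₀
    omega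

end SGraph

lemma neg_one_pow_congr' {m n : ℕ} (h : m % 2 = n % 2) : ((-1 : ℚ)) ^ m = (-1) ^ n := by
  conv_lhs => rw [← Nat.div_add_mod m 2]
  conv_rhs => rw [← Nat.div_add_mod n 2]
  rw [pow_add, pow_add, pow_mul, pow_mul, neg_one_sq, one_pow, one_pow, h]

lemma final_term (q t s : ℚ) (ht : t ≠ 0) (hts : t * s = q)
    (a n k₀ k' kb ku : ℕ) (h1 : k₀ ≤ n) (h2 : k₀ ≤ k') (h3 : n ≤ a + kb)
    (h4 : kb + ku = k') :
    (-1 : ℚ) ^ a * (q ^ kb * s ^ ku)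
      = (-1) ^ (n - k₀) * q ^ k₀ *
        ((1 - q - 1) ^ (k' - k₀) * ((0 : ℚ) - 1) ^ (a + kb - n) *
          ((1 - 1 / t) - 1) ^ ku) := by
  have hs : s = q / t := by rw [eq_div_iff ht, mul_comm]; exact hts
  have hb1 : (1 - q - 1 : ℚ) = -q := by ring
  have hb2 : ((0 : ℚ) - 1) = -1 := by ring
  have hb3 : ((1 - 1 / t) - 1 : ℚ) = -(1 / t) := by ring
  have e2 : (-1 : ℚ) ^ a
      = (-1) ^ (n - k₀) * (-1) ^ (k' - k₀) * (-1) ^ (a + kb - n) * (-1) ^ ku := by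
    rw [← pow_add, ← pow_add, ← pow_add]
    apply neg_one_pow_congr'
    omega
  have e1 : q ^ kb * q ^ ku = q ^ k₀ * q ^ (k' - k₀) := by
    rw [← pow_add, ← pow_add]
    congr 1
    omega
  rw [hs, hb1, hb2, hb3, neg_pow q, neg_pow (1 / t), div_pow, div_pow, one_pow, e2]
  rw [show q ^ kb * (q ^ ku / t ^ ku) = q ^ kb * q ^ ku / t ^ ku from by ring, e1]
  ring

end Aux

section Statement

open SGraph

/-- Corollary 6.6: the number of proper `G`-colorings of a signed graph is
`(−1)^{|V|−k(Σ)} · |G|^{k(Σ)} · T_Σ(1−|G|, 0, 1−1/|2G|)`. -/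
theorem card_proper_G_colorings (V E : Type) [Finite V] [Finite E]
    (Γ : SGraph V E) (G : Type) [AddCommGroup G] [Finite G] :
    (Nat.card {f : V → G // Γ.IsProperColoring f} : ℚ) =
      (-1 : ℚ) ^ (Nat.card V - Γ.kAll) * (Nat.card G : ℚ) ^ Γ.kAll *
        Γ.signedTutte (1 - (Nat.card G : ℚ)) 0
          (1 - 1 / (Nat.card (twoG G) : ℚ)) := by
  classical
  letI : Fintype E := Fintype.ofFinite E
  letI : Fintype V := Fintype.ofFinite V
  letI : Fintype G := Fintype.ofFinite G
  have hcard : ∀ p : (V → G) → Prop, (Nat.card {f : V → G // p f} : ℚ)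
      = ∑ f : V → G, if p f then (1 : ℚ) else 0 := fun p => by
    rw [Finset.sum_boole, Nat.card_eq_fintype_card, Fintype.card_subtype]
  set Bad : (V → G) → Finset E :=
    fun f => Finset.univ.filter
      (fun e => (Γ.sign e : ℤ) • f (Γ.ends e).1 = f (Γ.ends e).2) with hBad
  have hIE : (Nat.card {f : V → G // Γ.IsProperColoring f} : ℚ)
      = ∑ A : Finset E, (-1 : ℚ) ^ A.card *
          (Nat.card {f : V → G //
            ∀ e ∈ A, (Γ.sign e : ℤ) • f (Γ.ends e).1 = f (Γ.ends e).2} : ℚ) := by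
    simp only [hcard, Finset.mul_sum]
    rw [Finset.sum_comm]
    refine (Finset.sum_congr rfl fun f _ => ?_).symm
    have hsub : ∀ A : Finset E,
        (∀ e ∈ A, (Γ.sign e : ℤ) • f (Γ.ends e).1 = f (Γ.ends e).2) ↔ A ⊆ Bad f := by
      intro A
      simp [hBad, Finset.subset_iff]
    simp only [mul_ite, mul_one, mul_zero]
    rw [← Finset.sum_filter]
    refine Eq.trans (Finset.sum_congr (s₂ := (Bad f).powerset) ?_ fun B _ => rfl) ?_
    · ext B
      simp only [Finset.mem_filter, Finset.mem_univ, true_and, Finset.mem_powerset]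
      exact hsub B
    · rw [show (∑ A ∈ (Bad f).powerset, (-1 : ℚ) ^ A.card)
          = ((∑ A ∈ (Bad f).powerset, (-1 : ℤ) ^ A.card : ℤ) : ℚ) from by push_cast; rfl,
        Finset.sum_powerset_neg_one_pow_card, apply_ite (fun z : ℤ => (z : ℚ))]
      simp only [Int.cast_one, Int.cast_zero]
      refine if_congr ?_ rfl rfl
      simp only [hBad]
      rw [Finset.filter_eq_empty_iff]
      constructor
      · intro h e
        exact h (Finset.mem_univ e)
      · intro h e _
        exact h e
  have hA : ∀ A : Finset E,
      Nat.card {f : V → G // ∀ e ∈ A, (Γ.sign e : ℤ) • f (Γ.ends e).1 = f (Γ.ends e).2}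
        = Nat.card G ^ (Γ.restrict (A : Set E)).kb *
            Nat.card (↥(torsion2 G)) ^ (Γ.restrict (A : Set E)).ku := by
    intro A
    rw [← SGraph.card_sat (Γ.restrict (A : Set E)) G]
    refine Nat.card_congr (Equiv.subtypeEquivRight fun f => ?_)
    constructor
    · intro h e
      exact h e.1 e.2
    · intro h e he
      exact h ⟨e, he⟩
  rw [hIE, signedTutte, finsum_eq_sum_of_fintype, Finset.mul_sum]
  refine Finset.sum_congr rfl fun A _ => ?_
  rw [hA A]
  push_cast
  haveI : Nonempty (↥(twoG G)) := ⟨⟨0, zero_mem _⟩⟩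
  refine final_term _ _ _ ?_ ?_ _ _ _ _ _ _ ?_ ?_ ?_ ?_
  · exact Nat.cast_ne_zero.mpr Nat.card_pos.ne'
  · exact_mod_cast card_twoG_mul G
  · exact Γ.kAll_le_card
  · exact Γ.kAll_le_kAll_restrict (A : Set E)
  · exact Γ.card_le_card_add_kb A
  · exact (Γ.restrict (A : Set E)).kb_add_ku

end Statement
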